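/- If ρ^k ∈ [0, R], a^k ∈ ℝ with |a^k| ≤ A for all k, w^k = h(a^k/δx) where h : ℝ → (−1, b) is a continuous strictly increasing function with h(0) = 0, and ρ^k|w^k| → 0, then ρ^k|a^k| → 0 as k → ∞. -/

import Mathlib

open Set Filter

theorem rho_abs_a_tendsto_zero (R A δx b : ℝ)
    (hR : 0 < R) (hA : 0 < A) (hδx : 0 < δx) (hb : 0 < b)
    (h : ℝ → ℝ) (hcont : Continuous h) (hmono : StrictMono h) (h0 : h 0 = 0)
    (hhrange : ∀ s, h s ∈ Set.Ioo (-1 : ℝ) b)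
    (ρ a w : ℕ → ℝ)
    (hρ : ∀ k, ρ k ∈ Set.Icc (0 : ℝ) R)
    (ha : ∀ k, |a k| ≤ A)
    (hw : ∀ k, w k = h (a k / δx))
    (hlim : Filter.Tendsto (fun k => ρ k * |w k|) Filter.atTop (nhds 0)) :
    Filter.Tendsto (fun k => ρ k * |a k|) Filter.atTop (nhds 0) := by
  rw [Metric.tendsto_atTop] at hlim ⊢
  intro ε hε
  set δ : ℝ := ε / (2 * R) with hδdef
  have hδpos : 0 < δ := by positivity
  have h1 : 0 < h (δ / δx) := by
    rw [← h0]; exact hmono (by positivity)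
  have h2 : h (-(δ / δx)) < 0 := by
    rw [← h0]; exact hmono (by simp; positivity)
  set m : ℝ := min (h (δ / δx)) (-(h (-(δ / δx)))) with hmdef
  have hm : 0 < m := lt_min h1 (by linarith)
  obtain ⟨N, hN⟩ := hlim (m * ε / (2 * A)) (by positivity)
  refine ⟨N, fun n hn => ?_⟩
  have hdist := hN n hn
  simp only [Real.dist_eq, sub_zero] at hdist ⊢
  have hρn := hρ n
  have hρ0 : 0 ≤ ρ n := hρn.1
  have habs : (0:ℝ) ≤ ρ n * |w n| := by positivity
  rw [abs_of_nonneg habs] at hdist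
  have key : ρ n * |a n| < ε := by
    rcases le_or_gt (|a n|) δ with hle | hgt
    · calc ρ n * |a n| ≤ R * δ := by
            apply mul_le_mul hρn.2 hle (abs_nonneg _) hR.le
      _ = ε / 2 := by field_simp [hδdef]; rw [hδdef]; field_simp
      _ < ε := by linarith
    · -- |a n| > δ, so |w n| ≥ m
      have hwm : m ≤ |w n| := by
        rcases le_or_gt (a n) 0 with hne | hpos
        · have : a n ≤ -δ := by
            rw [abs_of_nonpos hne] at hgt; linarith
          have : h (a n / δx) ≤ h (-(δ / δx)) := by
            apply hmono.monotone
            rw [← neg_div]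
            gcongr
          have hwneg : w n ≤ h (-(δ / δx)) := by rw [hw]; exact this
          have : -(h (-(δ / δx))) ≤ |w n| := by
            rw [abs_of_nonpos (by linarith)]; linarith
          exact le_trans (min_le_right _ _) this
        · have : δ ≤ a n := by
            rw [abs_of_pos hpos] at hgt; linarith
          have : h (δ / δx) ≤ h (a n / δx) :=
            hmono.monotone (by rw [div_le_div_iff_of_pos_right hδx] at *; linarith)
          have hwpos : h (δ / δx) ≤ w n := by rw [hw]; exact this
          have : h (δ / δx) ≤ |w n| := le_trans hwpos (le_abs_self _)
          exact le_trans (min_le_left _ _) this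
      calc ρ n * |a n| ≤ ρ n * A := by
            apply mul_le_mul_of_nonneg_left (ha n) hρ0
      _ ≤ (ρ n * |w n|) * (A / m) := by
            have heq : ρ n * A = ρ n * m * (A / m) := by field_simp
            rw [heq]
            apply mul_le_mul_of_nonneg_right _ (by positivity)
            exact mul_le_mul_of_nonneg_left hwm hρ0
      _ < (m * ε / (2 * A)) * (A / m) := by
            apply mul_lt_mul_of_pos_right hdist (by positivity)
      _ = ε / 2 := by field_simp
      _ < ε := by linarith
  rw [abs_of_nonneg (by positivity)]
  exact key
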